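/- Let V be an ñ₊-module on which every weight vector in ñ₊ acts locally finitely, let v ∈ V, and let f(t) ∈ ℂ[t] be a nonzero polynomial divisible by t such that I(f)·v = 0. Then the subspace U(ñ₊)·v of V is finite-dimensional. -/

import Mathlib

/- Common framework for formalizing statements from
   "Irreducible modules over affine Kac–Moody algebras which are locally finite
    over the positive part" (Guo–Zhao).

   Conventions:
   * `g` is a finite-dimensional simple complex Lie algebra.
   * The loop algebra `g ⊗ ℂ[t,t⁻¹]` is modelled by the vector space `ℤ →₀ g`
     (`Finsupp.single p x` corresponds to `x ⊗ tᵖ`).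
   * The affine algebra `ĝ = g ⊗ ℂ[t,t⁻¹] ⊕ ℂK` is any Lie algebra equipped with
     an `AffineAlg` structure (a linear equivalence with `(ℤ →₀ g) × ℂ` fixing the
     bracket on generators, where `(0,1)` is the central element `K`).
   * Similarly `t̃g = ĝ ⊕ ℂd` is any Lie algebra with an `AffineAlgD` structure on
     `(ℤ →₀ g) × ℂ × ℂ`, where `(0,1,0) = K` and `(0,0,1) = d`.
   * The current algebra `g ⊗ ℂ[t]` is `Polynomial ℂ ⊗[ℂ] g`, and the positive part
     `ñ₊ = (g ⊗ tℂ[t]) ⊕ (n₊ ⊗ 1)` is any Lie algebra `nt` with an `NtAlg` structure: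
     an injective Lie algebra morphism into the current algebra with range `ñ₊`.
   * Induced modules are specified by structures that pin them down uniquely up to
     isomorphism (`IndModule` via the PBW description `ℂ[d] ⊗ M`, and universal
     properties for induction from `ñ₊`).
-/

open scoped TensorProduct
open Polynomial

noncomputable section

namespace AffinePaper

variable (g : Type) [LieRing g] [LieAlgebra ℂ g]

attribute [local instance 100] LieRing.ofAssociativeRing

/-- The current algebra `g ⊗ ℂ[t]` is a complex Lie algebra. -/
instance : LieAlgebra ℂ (Polynomial ℂ ⊗[ℂ] g) where
  lie_smul c x y := by
    rw [← algebraMap_smul (Polynomial ℂ) c y, ← algebraMap_smul (Polynomial ℂ) c ⁅x, y⁆]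
    exact lie_smul (algebraMap ℂ (Polynomial ℂ) c) x y

/-- The weight space of `ad H` on `g` for a functional `α` on a subalgebra `H`. -/
def wtSpace (H : LieSubalgebra ℂ g) (α : Module.Dual ℂ H) : Submodule ℂ g where
  carrier := {x : g | ∀ h : H, ⁅(h : g), x⁆ = α h • x}
  add_mem' := fun {a b} ha hb h => by rw [lie_add, ha h, hb h, smul_add]
  zero_mem' := fun h => by rw [lie_zero, smul_zero]
  smul_mem' := fun c x hx h => by rw [lie_smul, hx h]; exact smul_comm c (α h) x

/-- `α` is a root of `(g, H)`. -/
def IsRootOf (H : LieSubalgebra ℂ g) (α : Module.Dual ℂ H) : Prop :=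
  α ≠ 0 ∧ wtSpace g H α ≠ ⊥

/-- A triangular decomposition `g = n₋ ⊕ h ⊕ n₊` of `g` relative to a Cartan
subalgebra `H`, given by a positive system `P` of roots. -/
structure TriangularData where
  H : LieSubalgebra ℂ g
  nPos : LieSubalgebra ℂ g
  nNeg : LieSubalgebra ℂ g
  isCartan : H.IsCartanSubalgebra
  P : Set (Module.Dual ℂ H)
  pos_isRoot : ∀ α ∈ P, IsRootOf g H α
  pos_neg : ∀ α, IsRootOf g H α → (α ∈ P ↔ -α ∉ P)
  nPos_eq : nPos.toSubmodule = ⨆ α ∈ P, wtSpace g H α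
  nNeg_eq : nNeg.toSubmodule = ⨆ α ∈ P, wtSpace g H (-α)
  triang : nNeg.toSubmodule ⊔ H.toSubmodule ⊔ nPos.toSubmodule = ⊤

variable {g}

/-- The simple roots of a positive system: the positive roots that are not sums of
two positive roots. -/
def TriangularData.simpleRoots (D : TriangularData g) : Set (Module.Dual ℂ D.H) :=
  {α | α ∈ D.P ∧ ¬∃ β ∈ D.P, ∃ γ ∈ D.P, α = β + γ}

/-- `θ` is the highest root. -/
def TriangularData.IsHighestRoot (D : TriangularData g) (θ : Module.Dual ℂ D.H) : Prop :=
  θ ∈ D.P ∧ ∀ α ∈ D.P, ¬ IsRootOf g D.H (θ + α)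

/-- `lam ∈ h*` is dominant integral: it takes nonnegative integer values on all
coroots (elements `hc = ⁅e, f⁆ ∈ [g_α, g_{-α}]` with `α hc = 2`, `α` positive). -/
def IsDominantIntegral (D : TriangularData g) (lam : Module.Dual ℂ D.H) : Prop :=
  ∀ α ∈ D.P, ∀ (e f : g) (hc : D.H), e ∈ wtSpace g D.H α → f ∈ wtSpace g D.H (-α) →
    ⁅e, f⁆ = (hc : g) → α hc = 2 → ∃ n : ℕ, lam hc = (n : ℂ)

variable (g)

/-- The subspace `I(f) = n₊ ⊗ f ℂ[t] + (h ⊕ n₋) ⊗ t f ℂ[t]` of the current algebra. -/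
def idealI (D : TriangularData g) (f : Polynomial ℂ) : Submodule ℂ (Polynomial ℂ ⊗[ℂ] g) :=
  Submodule.span ℂ
    ({z | ∃ x ∈ D.nPos, ∃ p : Polynomial ℂ, z = (f * p) ⊗ₜ[ℂ] x} ∪
     {z | ∃ x : g, x ∈ D.H.toSubmodule ⊔ D.nNeg.toSubmodule ∧
        ∃ p : Polynomial ℂ, z = (X * f * p) ⊗ₜ[ℂ] x})

/-- The subspace `Σ_{α∈Δ₊∖Π} g_α ⊗ fℂ[t] + Σ_{α∈Π} g_α ⊗ tfℂ[t] +
Σ_{α∈Δ₊∖{θ}} g_{−α} ⊗ tfℂ[t] + g_{−θ} ⊗ t²fℂ[t] + h ⊗ tfℂ[t]` of the current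
algebra (`θ` the highest root); for `f = 1` this is the subspace `K` of Lemma 4.2. -/
def bigK (D : TriangularData g) (θ : Module.Dual ℂ D.H) (f : Polynomial ℂ) :
    Submodule ℂ (Polynomial ℂ ⊗[ℂ] g) :=
  Submodule.span ℂ
    ({z | ∃ α ∈ D.P, α ∉ D.simpleRoots ∧
        ∃ x ∈ wtSpace g D.H α, ∃ p : Polynomial ℂ, z = (f * p) ⊗ₜ[ℂ] x} ∪
     {z | ∃ α ∈ D.simpleRoots,
        ∃ x ∈ wtSpace g D.H α, ∃ p : Polynomial ℂ, z = (X * f * p) ⊗ₜ[ℂ] x} ∪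
     {z | ∃ α ∈ D.P, α ≠ θ ∧
        ∃ x ∈ wtSpace g D.H (-α), ∃ p : Polynomial ℂ, z = (X * f * p) ⊗ₜ[ℂ] x} ∪
     {z | ∃ x ∈ wtSpace g D.H (-θ), ∃ p : Polynomial ℂ, z = (X ^ 2 * f * p) ⊗ₜ[ℂ] x} ∪
     {z | ∃ x ∈ D.H, ∃ p : Polynomial ℂ, z = (X * f * p) ⊗ₜ[ℂ] x})

/-- The subspace of the current algebra corresponding to
`ñ₊ = (g ⊗ tℂ[t]) ⊕ (n₊ ⊗ 1)`. -/
def ntModel (D : TriangularData g) : Submodule ℂ (Polynomial ℂ ⊗[ℂ] g) :=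
  Submodule.span ℂ
    ({z | ∃ (k : ℕ) (x : g), 1 ≤ k ∧ z = (X ^ k : Polynomial ℂ) ⊗ₜ[ℂ] x} ∪
     {z | ∃ x ∈ D.nPos, z = (1 : Polynomial ℂ) ⊗ₜ[ℂ] x})

/-- A realization of the Lie algebra `ñ₊`: a Lie algebra `nt` together with an
injective morphism to the current algebra with range `(g ⊗ tℂ[t]) ⊕ (n₊ ⊗ 1)`. -/
structure NtAlg (D : TriangularData g) (nt : Type) [LieRing nt] [LieAlgebra ℂ nt] where
  ι : nt →ₗ⁅ℂ⁆ Polynomial ℂ ⊗[ℂ] g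
  inj : Function.Injective ι
  range_eq : LinearMap.range (ι.toLinearMap) = ntModel g D

/-- Evaluation of the current algebra at a point `a ∈ ℂ`: `x ⊗ p(t) ↦ p(a) • x`. -/
def ev (a : ℂ) : (Polynomial ℂ ⊗[ℂ] g) →ₗ[ℂ] g :=
  (TensorProduct.lid ℂ g).toLinearMap ∘ₗ
    (TensorProduct.map (Polynomial.aeval a).toLinearMap LinearMap.id)

/-- The canonical embedding of the current algebra `g ⊗ ℂ[t]` into the model
`ℤ →₀ g` of the loop algebra `g ⊗ ℂ[t,t⁻¹]` (sending `x ⊗ tᵏ` to `single k x`). -/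
def toLoop : (Polynomial ℂ ⊗[ℂ] g) →ₗ[ℂ] (ℤ →₀ g) :=
  (Finsupp.lmapDomain g ℂ (Nat.cast : ℕ → ℤ)) ∘ₗ
    (TensorProduct.finsuppScalarLeft ℂ g ℕ).toLinearMap ∘ₗ
    (TensorProduct.congr ((Polynomial.toFinsuppIsoAlg ℂ).toLinearEquiv.trans
        (AddMonoidAlgebra.coeffLinearEquiv ℂ))
      (LinearEquiv.refl ℂ g)).toLinearMap

/-- A weight vector of `ñ₊` (viewed inside the current algebra): a nonzero element
`x ⊗ tᵏ` with `x` in `h` or in a root space. -/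
def IsWeightVec (D : TriangularData g) (w : Polynomial ℂ ⊗[ℂ] g) : Prop :=
  w ≠ 0 ∧ ∃ (k : ℕ) (x : g), w = (X ^ k : Polynomial ℂ) ⊗ₜ[ℂ] x ∧
    (x ∈ D.H ∨ ∃ α, IsRootOf g D.H α ∧ x ∈ wtSpace g D.H α)

/-- An element `z` of a Lie algebra `L` acts locally finitely on a module `V`. -/
def ActsLocallyFinitely (L : Type) [LieRing L] (V : Type) [AddCommGroup V] [Module ℂ V]
    [LieRingModule L V] (z : L) : Prop :=
  ∀ v : V, ∃ W : Submodule ℂ V, v ∈ W ∧ FiniteDimensional ℂ W ∧ ∀ w ∈ W, ⁅z, w⁆ ∈ W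

/-- A realization of the affine Lie algebra `ĝ = (g ⊗ ℂ[t,t⁻¹]) ⊕ ℂK` (without
derivation): a Lie algebra `gh` with a linear equivalence `e` with the model space
`(ℤ →₀ g) × ℂ` such that `e (single p x, 0) = x ⊗ tᵖ`, `e (0,1) = K` is central, and
`[x ⊗ tᵖ, y ⊗ t^q] = [x,y] ⊗ t^{p+q} + p δ_{p+q,0} κ(x,y) K`, `κ` the Killing form. -/
structure AffineAlg (gh : Type) [LieRing gh] [LieAlgebra ℂ gh] where
  e : ((ℤ →₀ g) × ℂ) ≃ₗ[ℂ] gh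
  brkt : ∀ (p q : ℤ) (x y : g),
    ⁅e (Finsupp.single p x, 0), e (Finsupp.single q y, 0)⁆ =
      e (Finsupp.single (p + q) ⁅x, y⁆,
        if p + q = 0 then (p : ℂ) * killingForm ℂ g x y else 0)
  central : ∀ z : gh, ⁅e (0, 1), z⁆ = 0

/-- A realization of the affine Kac–Moody algebra `t̃g = (g ⊗ ℂ[t,t⁻¹]) ⊕ ℂK ⊕ ℂd`:
as in `AffineAlg`, with moreover `e (0,0,1) = d` satisfying `[d, x ⊗ tᵖ] = p x ⊗ tᵖ`. -/
structure AffineAlgD (gt : Type) [LieRing gt] [LieAlgebra ℂ gt] where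
  e : ((ℤ →₀ g) × ℂ × ℂ) ≃ₗ[ℂ] gt
  brkt : ∀ (p q : ℤ) (x y : g),
    ⁅e (Finsupp.single p x, 0, 0), e (Finsupp.single q y, 0, 0)⁆ =
      e (Finsupp.single (p + q) ⁅x, y⁆,
        (if p + q = 0 then (p : ℂ) * killingForm ℂ g x y else 0), 0)
  central : ∀ z : gt, ⁅e (0, 1, 0), z⁆ = 0
  dBrkt : ∀ (p : ℤ) (x : g),
    ⁅e (0, 0, 1), e (Finsupp.single p x, 0, 0)⁆ = e (Finsupp.single p ((p : ℂ) • x), 0, 0)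

variable {g}

/-- `V` is the irreducible highest weight `g`-module with highest weight `lam`:
it is irreducible and has a highest weight vector of weight `lam`. -/
structure IsHWModule (D : TriangularData g) (lam : Module.Dual ℂ D.H) (V : Type)
    [AddCommGroup V] [Module ℂ V] [LieRingModule g V] [LieModule ℂ g V] where
  v₀ : V
  ne : v₀ ≠ 0
  hwN : ∀ x ∈ D.nPos, ⁅x, v₀⁆ = 0
  hwH : ∀ h : D.H, ⁅(h : g), v₀⁆ = lam h • v₀
  irred : IsSimpleOrder (LieSubmodule ℂ g V)

/-- `E` is the evaluation module `E(λ, a) = V₁ ⊗ ⋯ ⊗ V_m` over `ĝ`: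
`(x ⊗ tᵏ) · (v₁ ⊗ ⋯ ⊗ v_m) = Σᵢ aᵢᵏ v₁ ⊗ ⋯ ⊗ (x · vᵢ) ⊗ ⋯ ⊗ v_m`, and `K` acts by `0`. -/
structure EvalModule {gh : Type} [LieRing gh] [LieAlgebra ℂ gh] (A : AffineAlg g gh)
    {m : ℕ} (a : Fin m → ℂ) (V : Fin m → Type) [∀ i, AddCommGroup (V i)]
    [∀ i, Module ℂ (V i)] [∀ i, LieRingModule g (V i)] [∀ i, LieModule ℂ g (V i)]
    (E : Type) [AddCommGroup E] [Module ℂ E] [LieRingModule gh E] [LieModule ℂ gh E] where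
  ψ : E ≃ₗ[ℂ] PiTensorProduct ℂ V
  act : ∀ (k : ℤ) (x : g) (v : ∀ i, V i),
    ⁅A.e (Finsupp.single k x, 0), ψ.symm (PiTensorProduct.tprod ℂ v)⁆ =
      ∑ i, (a i) ^ k • ψ.symm (PiTensorProduct.tprod ℂ (Function.update v i ⁅x, v i⁆))
  kAct : ∀ w : E, ⁅A.e (0, 1), w⁆ = 0

/-- `V` is the `t̃g`-module `M[d] = Ind_{ĝ}^{t̃g} M` induced from a `ĝ`-module `M`.
As a vector space `M[d] = ℂ[d] ⊗ M` (modelled by `ℕ →₀ M`, `single n v = dⁿ ⊗ v`);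
`d` shifts the degree and `ĝ` acts on `d⁰ ⊗ M` as on `M`.  These data determine the
`t̃g`-module structure uniquely. -/
structure IndModule {gh gt : Type} [LieRing gh] [LieAlgebra ℂ gh] [LieRing gt]
    [LieAlgebra ℂ gt] (T : AffineAlgD g gt) (A : AffineAlg g gh)
    (M : Type) [AddCommGroup M] [Module ℂ M] [LieRingModule gh M]
    (V : Type) [AddCommGroup V] [Module ℂ V] [LieRingModule gt V] where
  φ : (ℕ →₀ M) ≃ₗ[ℂ] V
  dAct : ∀ (n : ℕ) (v : M),
    ⁅T.e (0, 0, 1), φ (Finsupp.single n v)⁆ = φ (Finsupp.single (n + 1) v)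
  rest : ∀ (u : (ℤ →₀ g) × ℂ) (v : M),
    ⁅T.e (u.1, u.2, 0), φ (Finsupp.single 0 v)⁆ = φ (Finsupp.single 0 ⁅A.e u, v⁆)

/-- `S` is the `ñ₊`-module `S(η, λ, a) = ℂ v_η ⊗ L(λ₁) ⊗ ⋯ ⊗ L(λ_m)`:
`(x ⊗ p(t)) · (v₁ ⊗ ⋯ ⊗ v_m) = η(x ⊗ p(t)) (v₁ ⊗ ⋯ ⊗ v_m) + Σᵢ p(aᵢ) v₁ ⊗ ⋯ ⊗ (x vᵢ) ⊗ ⋯ ⊗ v_m`. -/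
structure SModule {nt : Type} [LieRing nt] [LieAlgebra ℂ nt] {D : TriangularData g}
    (NT : NtAlg g D nt) (η : nt →ₗ⁅ℂ⁆ ℂ) {m : ℕ} (a : Fin m → ℂ)
    (V : Fin m → Type) [∀ i, AddCommGroup (V i)] [∀ i, Module ℂ (V i)]
    [∀ i, LieRingModule g (V i)]
    (S : Type) [AddCommGroup S] [Module ℂ S] [LieRingModule nt S] where
  ψ : S ≃ₗ[ℂ] PiTensorProduct ℂ V
  act : ∀ (z : nt) (v : ∀ i, V i),
    ⁅z, ψ.symm (PiTensorProduct.tprod ℂ v)⁆ = η z • ψ.symm (PiTensorProduct.tprod ℂ v) +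
      ∑ i, ψ.symm (PiTensorProduct.tprod ℂ (Function.update v i ⁅ev g (a i) (NT.ι z), v i⁆))

/-- `V` is the irreducible highest weight `ĝ`-module with highest weight
`γ ∈ (h ⊕ ℂK)*`. -/
structure HWModuleAff {gh : Type} [LieRing gh] [LieAlgebra ℂ gh] (A : AffineAlg g gh)
    (D : TriangularData g) (γ : Module.Dual ℂ (↥D.H × ℂ)) (V : Type)
    [AddCommGroup V] [Module ℂ V] [LieRingModule gh V] [LieModule ℂ gh V] where
  v₀ : V
  ne : v₀ ≠ 0
  hwLoop : ∀ k : ℕ, 1 ≤ k → ∀ x : g, ⁅A.e (Finsupp.single (k : ℤ) x, 0), v₀⁆ = 0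
  hwN : ∀ x ∈ D.nPos, ⁅A.e (Finsupp.single 0 x, 0), v₀⁆ = 0
  hwH : ∀ (h : D.H) (c : ℂ), ⁅A.e (Finsupp.single 0 (h : g), c), v₀⁆ = γ (h, c) • v₀
  irred : IsSimpleOrder (LieSubmodule ℂ gh V)

/-- `W` is an irreducible Whittaker `ĝ`-module of type `η : ñ₊ → ℂ`. -/
structure WhittakerAff {gh : Type} [LieRing gh] [LieAlgebra ℂ gh] (A : AffineAlg g gh)
    {D : TriangularData g} {nt : Type} [LieRing nt] [LieAlgebra ℂ nt] (NT : NtAlg g D nt)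
    (η : nt →ₗ⁅ℂ⁆ ℂ) (W : Type)
    [AddCommGroup W] [Module ℂ W] [LieRingModule gh W] [LieModule ℂ gh W] where
  v₀ : W
  ne : v₀ ≠ 0
  wh : ∀ z : nt, ⁅A.e (toLoop g (NT.ι z), 0), v₀⁆ = η z • v₀
  irred : IsSimpleOrder (LieSubmodule ℂ gh W)

/-- `MS` is the induced `ĝ`-module `Ind_{ñ₊}^{ĝ} S`, characterized by its universal
property. -/
structure IndFromNt {gh : Type} [LieRing gh] [LieAlgebra ℂ gh] (A : AffineAlg g gh)
    {D : TriangularData g} {nt : Type} [LieRing nt] [LieAlgebra ℂ nt] (NT : NtAlg g D nt)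
    (S : Type) [AddCommGroup S] [Module ℂ S] [LieRingModule nt S]
    (MS : Type) [AddCommGroup MS] [Module ℂ MS] [LieRingModule gh MS]
    [LieModule ℂ gh MS] where
  ι₀ : S →ₗ[ℂ] MS
  compat : ∀ (z : nt) (s : S), ⁅A.e (toLoop g (NT.ι z), 0), ι₀ s⁆ = ι₀ ⁅z, s⁆
  univ : ∀ (W : Type) [AddCommGroup W] [Module ℂ W] [LieRingModule gh W]
    [LieModule ℂ gh W] (f : S →ₗ[ℂ] W),
    (∀ (z : nt) (s : S), ⁅A.e (toLoop g (NT.ι z), 0), f s⁆ = f ⁅z, s⁆) →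
    ∃! F : MS →ₗ⁅ℂ,gh⁆ W, F.toLinearMap ∘ₗ ι₀ = f

/-- `M0` is the universal Whittaker module `M(η) = Ind_{ñ₊}^{ĝ} ℂ_η`, characterized
by its universal property. -/
structure UnivWhittaker {gh : Type} [LieRing gh] [LieAlgebra ℂ gh] (A : AffineAlg g gh)
    {D : TriangularData g} {nt : Type} [LieRing nt] [LieAlgebra ℂ nt] (NT : NtAlg g D nt)
    (η : nt →ₗ⁅ℂ⁆ ℂ) (M0 : Type) [AddCommGroup M0] [Module ℂ M0] [LieRingModule gh M0]
    [LieModule ℂ gh M0] where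
  u₀ : M0
  rel : ∀ z : nt, ⁅A.e (toLoop g (NT.ι z), 0), u₀⁆ = η z • u₀
  univ : ∀ (W : Type) [AddCommGroup W] [Module ℂ W] [LieRingModule gh W]
    [LieModule ℂ gh W] (w : W),
    (∀ z : nt, ⁅A.e (toLoop g (NT.ι z), 0), w⁆ = η z • w) →
    ∃! F : M0 →ₗ⁅ℂ,gh⁆ W, F u₀ = w

variable (g)

/-- A bundled Lie module over a complex Lie algebra `L`. -/
structure LieModOf (L : Type) [LieRing L] [LieAlgebra ℂ L] : Type 1 where
  carrier : Type
  [ac : AddCommGroup carrier]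
  [mo : Module ℂ carrier]
  [lrm : LieRingModule L carrier]
  [lm : LieModule ℂ L carrier]

attribute [instance] LieModOf.ac LieModOf.mo LieModOf.lrm LieModOf.lm

section Statement6Aux

variable {g}

lemma ev_tmul' (a : ℂ) (p : Polynomial ℂ) (x : g) :
    ev g a (p ⊗ₜ[ℂ] x) = (Polynomial.aeval a p) • x := by
  simp [ev]

lemma Xpow_tmul_ne_zero (k : ℕ) {x : g} (hx : x ≠ 0) :
    ((X : Polynomial ℂ) ^ k) ⊗ₜ[ℂ] x ≠ (0 : Polynomial ℂ ⊗[ℂ] g) := by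
  intro h
  apply hx
  have h2 := congrArg (ev g 1) h
  rw [ev_tmul', map_zero] at h2
  simpa using h2

lemma lie_mem_idealI (D : TriangularData g) (f : Polynomial ℂ)
    {x y : Polynomial ℂ ⊗[ℂ] g} (hx : x ∈ ntModel g D) (hy : y ∈ idealI g D f) :
    ⁅x, y⁆ ∈ idealI g D f := by
  have hgen1 : ∀ (q : Polynomial ℂ) (w : g), w ∈ D.nPos →
      (f * q) ⊗ₜ[ℂ] w ∈ idealI g D f := fun q w hw =>
    Submodule.subset_span (Or.inl ⟨w, hw, q, rfl⟩)
  have hgen2 : ∀ (q : Polynomial ℂ) (w : g), w ∈ D.H.toSubmodule ⊔ D.nNeg.toSubmodule →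
      (X * f * q) ⊗ₜ[ℂ] w ∈ idealI g D f := fun q w hw =>
    Submodule.subset_span (Or.inr ⟨w, hw, q, rfl⟩)
  have hdec : ∀ w : g, ∃ a ∈ D.H.toSubmodule ⊔ D.nNeg.toSubmodule, ∃ b ∈ D.nPos,
      w = a + b := by
    intro w
    have hw : w ∈ D.nNeg.toSubmodule ⊔ D.H.toSubmodule ⊔ D.nPos.toSubmodule := by
      rw [D.triang]; exact Submodule.mem_top
    obtain ⟨u, hu, b, hb, rfl⟩ := Submodule.mem_sup.mp hw
    exact ⟨u, by rwa [sup_comm], b, hb, rfl⟩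
  have hkey : ∀ q1 q2 : Polynomial ℂ, f * q1 = X * f * q2 → ∀ w : g,
      (f * q1) ⊗ₜ[ℂ] w ∈ idealI g D f := by
    intro q1 q2 hq w
    obtain ⟨a, ha, b, hb, rfl⟩ := hdec w
    rw [TensorProduct.tmul_add]
    exact Submodule.add_mem _ (by rw [hq]; exact hgen2 q2 a ha) (hgen1 q1 b hb)
  have hgen : ∀ x0 ∈ ({z | ∃ (k : ℕ) (x : g), 1 ≤ k ∧ z = (X ^ k : Polynomial ℂ) ⊗ₜ[ℂ] x} ∪
      {z | ∃ x ∈ D.nPos, z = (1 : Polynomial ℂ) ⊗ₜ[ℂ] x} : Set (Polynomial ℂ ⊗[ℂ] g)),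
      ∀ y0 ∈ idealI g D f, ⁅x0, y0⁆ ∈ idealI g D f := by
    intro x0 hx0 y0 hy0
    suffices h : idealI g D f ≤
        Submodule.comap (LieAlgebra.ad ℂ (Polynomial ℂ ⊗[ℂ] g) x0) (idealI g D f) by
      simpa [LieAlgebra.ad_apply] using h hy0
    rcases hx0 with ⟨k, a, hk, rfl⟩ | ⟨a, ha, rfl⟩
    · obtain ⟨k, rfl⟩ : ∃ k', k = k' + 1 := ⟨k - 1, by omega⟩
      rw [idealI, Submodule.span_le]
      rintro y0' (⟨w, hw, p, rfl⟩ | ⟨w, hw, p, rfl⟩) <;>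
        simp only [Set.mem_setOf_eq, SetLike.mem_coe, Submodule.mem_comap, LieAlgebra.ad_apply,
          LieAlgebra.ExtendScalars.bracket_tmul]
      · have h1 : (X : Polynomial ℂ) ^ (k + 1) * (f * p) = f * (X ^ (k + 1) * p) := by ring
        rw [h1]
        exact hkey _ (X ^ k * p) (by ring) _
      · have h1 : (X : Polynomial ℂ) ^ (k + 1) * (X * f * p) = f * (X ^ (k + 2) * p) := by ring
        rw [h1]
        exact hkey _ (X ^ (k + 1) * p) (by ring) _
    · rw [idealI, Submodule.span_le]
      rintro y0' (⟨w, hw, p, rfl⟩ | ⟨w, hw, p, rfl⟩) <;>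
        simp only [Set.mem_setOf_eq, SetLike.mem_coe, Submodule.mem_comap, LieAlgebra.ad_apply,
          LieAlgebra.ExtendScalars.bracket_tmul, one_mul]
      · exact hgen1 p _ (D.nPos.lie_mem ha hw)
      · have h1 : (X : Polynomial ℂ) * f * p = f * (X * p) := by ring
        rw [h1]
        exact hkey _ p (by ring) _
  have hstepB : ∀ y0 ∈ idealI g D f, ntModel g D ≤
      Submodule.comap (LieAlgebra.ad ℂ (Polynomial ℂ ⊗[ℂ] g) y0) (idealI g D f) := by
    intro y0 hy0
    rw [ntModel, Submodule.span_le]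
    intro x0 hx0
    simp only [SetLike.mem_coe, Submodule.mem_comap, LieAlgebra.ad_apply]
    rw [← lie_skew]
    exact Submodule.neg_mem _ (hgen x0 hx0 y0 hy0)
  have h2 := hstepB y hy hx
  simp only [Submodule.mem_comap, LieAlgebra.ad_apply] at h2
  rw [← lie_skew]
  exact Submodule.neg_mem _ h2

lemma exists_finite_span_subset [FiniteDimensional ℂ g] (S : Set g) :
    ∃ T ⊆ S, T.Finite ∧ Submodule.span ℂ T = Submodule.span ℂ S := by
  classical
  obtain ⟨s, hs⟩ := IsNoetherian.noetherian (Submodule.span ℂ S)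
  have hmem : ∀ b ∈ s, ∃ t : Finset g, ↑t ⊆ S ∧ (b : g) ∈ Submodule.span ℂ (t : Set g) := by
    intro b hb
    have hb' : (b : g) ∈ Submodule.span ℂ S := by
      rw [← hs]; exact Submodule.subset_span hb
    exact Submodule.mem_span_finite_of_mem_span hb'
  choose t ht1 ht2 using hmem
  refine ⟨⋃ b ∈ s.attach, ↑(t b.1 b.2), ?_, ?_, ?_⟩
  · exact Set.iUnion₂_subset fun b _ => ht1 b.1 b.2
  · exact Set.Finite.biUnion s.attach.finite_toSet fun b _ => (t b.1 b.2).finite_toSet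
  · apply le_antisymm
    · exact Submodule.span_mono (Set.iUnion₂_subset fun b _ => ht1 b.1 b.2)
    · rw [← hs, Submodule.span_le]
      intro b hb
      replace hb : b ∈ s := hb
      have h3 : (b : g) ∈ Submodule.span ℂ ((t b hb : Finset g) : Set g) := ht2 b hb
      refine Submodule.span_mono ?_ h3
      exact Set.subset_iUnion₂ (s := fun (b : {x // x ∈ s}) (_ : b ∈ s.attach) =>
        ((t b.1 b.2 : Finset g) : Set g)) ⟨b, hb⟩ (s.mem_attach _)

lemma exists_weight_span [FiniteDimensional ℂ g] (D : TriangularData g) (f : Polynomial ℂ)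
    (hf : f ≠ 0) :
    ∃ Z : Set (Polynomial ℂ ⊗[ℂ] g), Z.Finite ∧ (∀ w ∈ Z, IsWeightVec g D w) ∧
      (∀ w ∈ Z, w ∈ ntModel g D) ∧
      ntModel g D ≤ Submodule.span ℂ Z ⊔ idealI g D f := by
  classical
  -- finite spanning sets of weight vectors
  set SP : Set g := ⋃ α ∈ D.P, ↑(wtSpace g D.H α) with hSP
  set SN : Set g := ⋃ α ∈ D.P, ↑(wtSpace g D.H (-α)) with hSN
  have hspanSP : Submodule.span ℂ SP = D.nPos.toSubmodule := by
    rw [hSP, Submodule.span_iUnion₂]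
    simp_rw [Submodule.span_eq]
    exact D.nPos_eq.symm
  have hspanSN : Submodule.span ℂ SN = D.nNeg.toSubmodule := by
    rw [hSN, Submodule.span_iUnion₂]
    simp_rw [Submodule.span_eq]
    exact D.nNeg_eq.symm
  obtain ⟨TP, hTPsub, hTPfin, hTPspan⟩ := exists_finite_span_subset SP
  obtain ⟨TN, hTNsub, hTNfin, hTNspan⟩ := exists_finite_span_subset SN
  obtain ⟨TH, hTHsub, hTHfin, hTHspan⟩ := exists_finite_span_subset (↑D.H.toSubmodule : Set g)
  rw [hspanSP] at hTPspan
  rw [hspanSN] at hTNspan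
  rw [Submodule.span_eq] at hTHspan
  -- remove zero
  have hdiff : ∀ T : Set g, Submodule.span ℂ (T \ {0}) = Submodule.span ℂ T := by
    intro T
    apply le_antisymm (Submodule.span_mono Set.diff_subset)
    rw [Submodule.span_le]
    intro t ht
    by_cases h : t = 0
    · subst h; exact Submodule.zero_mem _
    · exact Submodule.subset_span ⟨ht, by simpa using h⟩
  set T' : Set g := (TP ∪ TN ∪ TH) \ {0} with hT'
  set P' : Set g := TP \ {0} with hP'
  have hspanT' : Submodule.span ℂ T' = ⊤ := by
    rw [hT', hdiff, Submodule.span_union, Submodule.span_union, hTPspan, hTNspan, hTHspan]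
    rw [eq_top_iff, ← D.triang]
    exact sup_le (sup_le (le_sup_of_le_left le_sup_right) le_sup_right)
      (le_sup_of_le_left le_sup_left)
  have hspanP' : Submodule.span ℂ P' = D.nPos.toSubmodule := by
    rw [hP', hdiff, hTPspan]
  -- membership facts
  have hTPw : ∀ t ∈ TP, ∃ α ∈ D.P, t ∈ wtSpace g D.H α := by
    intro t ht
    have := hTPsub ht
    rw [hSP] at this
    simpa using this
  have hTNw : ∀ t ∈ TN, ∃ α ∈ D.P, t ∈ wtSpace g D.H (-α) := by
    intro t ht
    have := hTNsub ht
    rw [hSN] at this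
    simpa using this
  have hTPpos : ∀ t ∈ TP, t ∈ D.nPos.toSubmodule := by
    intro t ht
    obtain ⟨α, hα, htα⟩ := hTPw t ht
    have hle : wtSpace g D.H α ≤ D.nPos.toSubmodule := by
      rw [D.nPos_eq]
      exact le_iSup₂ (f := fun α (_ : α ∈ D.P) => wtSpace g D.H α) α hα
    exact hle htα
  have hTNneg : ∀ t ∈ TN, t ∈ D.nNeg.toSubmodule := by
    intro t ht
    obtain ⟨α, hα, htα⟩ := hTNw t ht
    have hle : wtSpace g D.H (-α) ≤ D.nNeg.toSubmodule := by
      rw [D.nNeg_eq]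
      exact le_iSup₂ (f := fun α (_ : α ∈ D.P) => wtSpace g D.H (-α)) α hα
    exact hle htα
  -- the finite set Z
  set m := f.natDegree with hm
  set Z : Set (Polynomial ℂ ⊗[ℂ] g) :=
    (fun pr : ℕ × g => ((X : Polynomial ℂ) ^ pr.1) ⊗ₜ[ℂ] pr.2) '' (Set.Icc 1 (m + 1) ×ˢ T') ∪
      (fun t : g => (1 : Polynomial ℂ) ⊗ₜ[ℂ] t) '' P' with hZ
  have hT'fin : T'.Finite := (hTPfin.union hTNfin |>.union hTHfin).diff
  have hP'fin : P'.Finite := hTPfin.diff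
  have hwt : ∀ t ∈ T', t ∈ D.H ∨ ∃ α, IsRootOf g D.H α ∧ t ∈ wtSpace g D.H α := by
    rintro t ⟨ht, ht0⟩
    have ht0' : t ≠ 0 := by simpa using ht0
    rcases ht with (htp | htn) | hth
    · obtain ⟨α, hα, htα⟩ := hTPw t htp
      exact Or.inr ⟨α, D.pos_isRoot α hα, htα⟩
    · obtain ⟨α, hα, htα⟩ := hTNw t htn
      refine Or.inr ⟨-α, ⟨neg_ne_zero.mpr (D.pos_isRoot α hα).1, ?_⟩, htα⟩
      intro hbot
      rw [hbot] at htα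
      exact ht0' (by simpa using htα)
    · exact Or.inl (hTHsub hth)
  refine ⟨Z, ?_, ?_, ?_, ?_⟩
  · exact Set.Finite.union (Set.Finite.image _ ((Set.finite_Icc 1 (m + 1)).prod hT'fin))
      (Set.Finite.image _ hP'fin)
  · rintro w (⟨⟨k, t⟩, ⟨hk, ht⟩, rfl⟩ | ⟨t, ht, rfl⟩)
    · have ht0 : t ≠ 0 := by
        rcases ht with ⟨-, h0⟩; simpa using h0
      exact ⟨Xpow_tmul_ne_zero k ht0, k, t, rfl, hwt t ht⟩
    · have ht0 : t ≠ 0 := by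
        rcases ht with ⟨-, h0⟩; simpa using h0
      have ht' : t ∈ T' := ⟨Or.inl (Or.inl ht.1), ht.2⟩
      refine ⟨?_, 0, t, by rw [pow_zero], hwt t ht'⟩
      have := Xpow_tmul_ne_zero (g := g) 0 ht0
      rwa [pow_zero] at this
  · rintro w (⟨⟨k, t⟩, ⟨hk, ht⟩, rfl⟩ | ⟨t, ht, rfl⟩)
    · exact Submodule.subset_span (Or.inl ⟨k, t, (Set.mem_Icc.mp hk).1, rfl⟩)
    · exact Submodule.subset_span (Or.inr ⟨t, hTPpos t ht.1, rfl⟩)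
  · -- spanning modulo the ideal
    set f₀ : Polynomial ℂ := f * C f.leadingCoeff⁻¹ with hf₀
    have hmonic : f₀.Monic := Polynomial.monic_mul_leadingCoeff_inv hf
    have hrdeg : ∀ p : Polynomial ℂ, (p %ₘ f₀).natDegree ≤ m := by
      intro p
      have h1 : (p %ₘ f₀).degree < f₀.degree := Polynomial.degree_modByMonic_lt p hmonic
      have h2 : f₀.degree = f.degree := Polynomial.degree_mul_leadingCoeff_inv f hf
      rw [h2, Polynomial.degree_eq_natDegree hf] at h1
      exact Polynomial.natDegree_le_iff_degree_le.mpr (le_of_lt h1)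
    have hZX : ∀ (j : ℕ) (t : g), 1 ≤ j → j ≤ m + 1 → t ∈ T' →
        ((X : Polynomial ℂ) ^ j) ⊗ₜ[ℂ] t ∈ Submodule.span ℂ Z := by
      intro j t h1 h2 ht
      exact Submodule.subset_span (Or.inl ⟨⟨j, t⟩, ⟨Set.mem_Icc.mpr ⟨h1, h2⟩, ht⟩, rfl⟩)
    have hCneg : ∀ (k : ℕ), 1 ≤ k → ∀ t ∈ T', t ∈ D.H.toSubmodule ⊔ D.nNeg.toSubmodule →
        ((X : Polynomial ℂ) ^ k) ⊗ₜ[ℂ] t ∈ Submodule.span ℂ Z ⊔ idealI g D f := by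
      intro k hk t ht htHN
      obtain ⟨k', rfl⟩ : ∃ k', k = k' + 1 := ⟨k - 1, by omega⟩
      have hdm := Polynomial.modByMonic_add_div ((X : Polynomial ℂ) ^ k') f₀
      have heq : (X : Polynomial ℂ) ^ (k' + 1) =
          X * ((X : Polynomial ℂ) ^ k' %ₘ f₀) + X * f₀ * ((X : Polynomial ℂ) ^ k' /ₘ f₀) := by
        conv_lhs => rw [pow_succ, ← hdm]
        ring
      rw [heq, TensorProduct.add_tmul]
      apply Submodule.add_mem
      · apply Submodule.mem_sup_left
        have hr : X * ((X : Polynomial ℂ) ^ k' %ₘ f₀) = ∑ j ∈ Finset.range (m + 1),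
            C (((X : Polynomial ℂ) ^ k' %ₘ f₀).coeff j) * X ^ (j + 1) := by
          conv_lhs => rw [Polynomial.as_sum_range' _ (m + 1) (Nat.lt_succ_of_le (hrdeg _))]
          rw [Finset.mul_sum]
          refine Finset.sum_congr rfl fun j _ => ?_
          rw [← Polynomial.C_mul_X_pow_eq_monomial]; ring
        rw [hr, TensorProduct.sum_tmul]
        apply Submodule.sum_mem
        intro j hj
        rw [← Polynomial.smul_eq_C_mul, ← TensorProduct.smul_tmul']
        apply Submodule.smul_mem
        exact hZX (j + 1) t (by omega) (by have := Finset.mem_range.mp hj; omega) ht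
      · apply Submodule.mem_sup_right
        have heq2 : X * f₀ * ((X : Polynomial ℂ) ^ k' /ₘ f₀) =
            X * f * (C f.leadingCoeff⁻¹ * ((X : Polynomial ℂ) ^ k' /ₘ f₀)) := by
          rw [hf₀]; ring
        rw [heq2]
        exact Submodule.subset_span (Or.inr ⟨t, htHN, _, rfl⟩)
    have hC1 : ∀ (k : ℕ), 1 ≤ k → ∀ t ∈ T',
        ((X : Polynomial ℂ) ^ k) ⊗ₜ[ℂ] t ∈ Submodule.span ℂ Z ⊔ idealI g D f := by
      intro k hk t ht
      have htT := ht
      rcases ht with ⟨htU, ht0⟩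
      rcases htU with (htp | htn) | hth
      · -- t ∈ TP : positive part
        have htP : t ∈ D.nPos := hTPpos t htp
        have hdm := Polynomial.modByMonic_add_div ((X : Polynomial ℂ) ^ k) f₀
        have heqk : ((X : Polynomial ℂ) ^ k) ⊗ₜ[ℂ] t =
            ((X : Polynomial ℂ) ^ k %ₘ f₀) ⊗ₜ[ℂ] t + (f₀ * ((X : Polynomial ℂ) ^ k /ₘ f₀)) ⊗ₜ[ℂ] t := by
          rw [← TensorProduct.add_tmul]
          conv_lhs => rw [← hdm]
        rw [heqk]
        apply Submodule.add_mem
        · -- remainder part lands in span Z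
          apply Submodule.mem_sup_left
          rw [Polynomial.as_sum_range' _ (m + 1) (Nat.lt_succ_of_le (hrdeg _)),
            TensorProduct.sum_tmul]
          apply Submodule.sum_mem
          intro j hj
          rw [← Polynomial.C_mul_X_pow_eq_monomial, ← Polynomial.smul_eq_C_mul,
            ← TensorProduct.smul_tmul']
          apply Submodule.smul_mem
          by_cases hj0 : j = 0
          · subst hj0
            rw [pow_zero]
            exact Submodule.subset_span (Or.inr ⟨t, ⟨htp, ht0⟩, rfl⟩)
          · exact hZX j t (by omega) (by
              have := Finset.mem_range.mp hj; omega) htT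
        · -- divisible part lands in the ideal
          apply Submodule.mem_sup_right
          have heq : f₀ * ((X : Polynomial ℂ) ^ k /ₘ f₀) =
              f * (C f.leadingCoeff⁻¹ * ((X : Polynomial ℂ) ^ k /ₘ f₀)) := by
            rw [hf₀]; ring
          rw [heq]
          exact Submodule.subset_span (Or.inl ⟨t, htP, _, rfl⟩)
      · -- t ∈ TN : lands in h ⊕ n₋
        exact hCneg k hk t htT (Submodule.mem_sup_right (hTNneg t htn))
      · exact hCneg k hk t htT (Submodule.mem_sup_left (hTHsub hth))
    rw [ntModel, Submodule.span_le]
    rintro w (⟨k, x, hk, rfl⟩ | ⟨x, hx, rfl⟩)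
    · have hxT : x ∈ Submodule.span ℂ T' := by rw [hspanT']; exact Submodule.mem_top
      have hmap : ((X : Polynomial ℂ) ^ k) ⊗ₜ[ℂ] x ∈
          Submodule.map (TensorProduct.mk ℂ (Polynomial ℂ) g ((X : Polynomial ℂ) ^ k))
            (Submodule.span ℂ T') := ⟨x, hxT, rfl⟩
      rw [Submodule.map_span] at hmap
      refine Submodule.span_le.mpr ?_ hmap
      rintro _ ⟨t, ht, rfl⟩
      exact hC1 k hk t ht
    · have hx' : x ∈ Submodule.span ℂ P' := by rw [hspanP']; exact hx
      have hmap : (1 : Polynomial ℂ) ⊗ₜ[ℂ] x ∈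
          Submodule.map (TensorProduct.mk ℂ (Polynomial ℂ) g 1) (Submodule.span ℂ P') :=
        ⟨x, hx', rfl⟩
      rw [Submodule.map_span] at hmap
      refine Submodule.span_le.mpr ?_ hmap
      rintro _ ⟨t, ht, rfl⟩
      exact Submodule.mem_sup_left (Submodule.subset_span (Or.inr ⟨t, ht, rfl⟩))

lemma lf_closure {L V : Type} [LieRing L] [LieAlgebra ℂ L] [AddCommGroup V] [Module ℂ V]
    [LieRingModule L V] [LieModule ℂ L V] {z : L} (hz : ActsLocallyFinitely L V z)
    (F : Submodule ℂ V) (hF : FiniteDimensional ℂ F) :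
    ∃ F' : Submodule ℂ V, F ≤ F' ∧ FiniteDimensional ℂ F' ∧ ∀ w ∈ F', ⁅z, w⁆ ∈ F' := by
  classical
  obtain ⟨s, hs⟩ := Module.Finite.iff_fg.mp hF
  choose Wf hWmem hWfin hWinv using hz
  refine ⟨s.sup Wf, ?_, ?_, ?_⟩
  · rw [← hs, Submodule.span_le]
    intro b hb
    exact (Finset.le_sup hb : Wf b ≤ s.sup Wf) (hWmem b)
  · refine Finset.sup_induction (p := fun F' : Submodule ℂ V => FiniteDimensional ℂ F') ?_ ?_ ?_
    · exact (inferInstance : FiniteDimensional ℂ (⊥ : Submodule ℂ V))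
    · intro a ha b hb
      haveI := ha; haveI := hb
      infer_instance
    · intro b _
      exact hWfin b
  · refine Finset.sup_induction
      (p := fun F' : Submodule ℂ V => ∀ w ∈ F', ⁅z, w⁆ ∈ F') ?_ ?_ ?_
    · intro w hw
      rw [Submodule.mem_bot] at hw
      rw [hw, lie_zero]
      exact Submodule.zero_mem _
    · intro A hA B hB w hw
      obtain ⟨a, ha, b, hb, rfl⟩ := Submodule.mem_sup.mp hw
      rw [lie_add]
      exact Submodule.add_mem _ (Submodule.mem_sup_left (hA a ha)) (Submodule.mem_sup_right (hB b hb))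
    · intro b _
      exact hWinv b

lemma exists_invariant_chain {L V : Type} [LieRing L] [LieAlgebra ℂ L] [AddCommGroup V]
    [Module ℂ V] [LieRingModule L V] [LieModule ℂ L V] (y : ℕ → L) (v : V)
    (hy : ∀ n, ActsLocallyFinitely L V (y n) ∨ y n = 0) :
    ∃ W : ℕ → Submodule ℂ V, v ∈ W 0 ∧ Monotone W ∧ (∀ n, FiniteDimensional ℂ (W n)) ∧
      ∀ n, ∀ w ∈ W (n + 1), ⁅y n, w⁆ ∈ W (n + 1) := by
  classical
  have step : ∀ n (F : Submodule ℂ V), FiniteDimensional ℂ F →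
      ∃ F', F ≤ F' ∧ FiniteDimensional ℂ F' ∧ ∀ w ∈ F', ⁅y n, w⁆ ∈ F' := by
    intro n F hF
    rcases hy n with h | h
    · exact lf_closure h F hF
    · exact ⟨F, le_rfl, hF, fun w hw => by rw [h, zero_lie]; exact F.zero_mem⟩
  let next : ℕ → Submodule ℂ V → Submodule ℂ V := fun n F =>
    if h : FiniteDimensional ℂ F then (step n F h).choose else ⊥
  let W : ℕ → Submodule ℂ V := fun n => Nat.rec (motive := fun _ => Submodule ℂ V)
    (Submodule.span ℂ ({v} : Set V)) next n
  have hWsucc : ∀ n, W (n + 1) = next n (W n) := fun n => rfl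
  have hfin : ∀ n, FiniteDimensional ℂ ↥(W n) := by
    intro n
    induction n with
    | zero =>
      show FiniteDimensional ℂ ↥(Submodule.span ℂ ({v} : Set V))
      exact FiniteDimensional.span_of_finite ℂ (Set.finite_singleton v)
    | succ n ih =>
      rw [hWsucc, show next n (W n) = (step n (W n) ih).choose from dif_pos ih]
      exact (step n (W n) ih).choose_spec.2.1
  have hle : ∀ n, W n ≤ W (n + 1) := by
    intro n
    rw [hWsucc, show next n (W n) = (step n (W n) (hfin n)).choose from dif_pos (hfin n)]
    exact (step n (W n) (hfin n)).choose_spec.1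
  refine ⟨W, Submodule.mem_span_singleton_self v, monotone_nat_of_le_succ hle, hfin, ?_⟩
  intro n
  rw [hWsucc, show next n (W n) = (step n (W n) (hfin n)).choose from dif_pos (hfin n)]
  exact (step n (W n) (hfin n)).choose_spec.2.2

end Statement6Aux

/-- if every weight vector of `ñ₊` acts locally finitely on the
`ñ₊`-module `V`, `t ∣ f`, `f ≠ 0` and `I(f) v = 0`, then `U(ñ₊) v` (the
`ñ₊`-submodule generated by `v`) is finite-dimensional. -/
theorem statement6 (g : Type) [LieRing g] [LieAlgebra ℂ g] [FiniteDimensional ℂ g]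
    [LieAlgebra.IsSimple ℂ g] (D : TriangularData g)
    (nt : Type) [LieRing nt] [LieAlgebra ℂ nt] (NT : NtAlg g D nt)
    (V : Type) [AddCommGroup V] [Module ℂ V] [LieRingModule nt V] [LieModule ℂ nt V]
    (hlf : ∀ z : nt, IsWeightVec g D (NT.ι z) → ActsLocallyFinitely nt V z)
    (v : V) (f : Polynomial ℂ) (hf : f ≠ 0) (hdvd : X ∣ f)
    (hann : ∀ z : nt, NT.ι z ∈ idealI g D f → ⁅z, v⁆ = 0) :
    FiniteDimensional ℂ ↥(LieSubmodule.lieSpan ℂ nt {v}) := by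
  classical
  obtain ⟨Z, hZfin, hZwt, hZnt, hZspan⟩ := exists_weight_span D f hf
  obtain ⟨N, wemb, hwrange⟩ := hZfin.fin_embedding
  have hlift : ∀ i : Fin N, ∃ u : nt, NT.ι u = wemb i := by
    intro i
    have h1 : (wemb i : Polynomial ℂ ⊗[ℂ] g) ∈ ntModel g D :=
      hZnt _ (hwrange ▸ Set.mem_range_self i)
    rw [← NT.range_eq] at h1
    exact h1
  choose z hz using hlift
  have hPwt : ∀ i, IsWeightVec g D (NT.ι (z i)) := by
    intro i
    rw [hz i]
    exact hZwt _ (hwrange ▸ Set.mem_range_self i)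
  -- decomposition of an arbitrary element modulo the ideal
  have hdecomp : ∀ y : nt, ∃ c : Fin N → ℂ, NT.ι (y - ∑ i, c i • z i) ∈ idealI g D f := by
    intro y
    have hy : NT.ι y ∈ Submodule.span ℂ Z ⊔ idealI g D f := by
      apply hZspan
      rw [← NT.range_eq]
      exact ⟨y, rfl⟩
    obtain ⟨a, ha, b, hb, hab⟩ := Submodule.mem_sup.mp hy
    have hZr : Z = Set.range fun i => NT.ι (z i) := by
      rw [show (fun i => NT.ι (z i)) = fun i => (wemb i : Polynomial ℂ ⊗[ℂ] g) from funext hz]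
      exact hwrange.symm
    rw [hZr] at ha
    obtain ⟨c, hc⟩ := Submodule.mem_span_range_iff_exists_fun ℂ |>.mp ha
    refine ⟨c, ?_⟩
    have heq : NT.ι (y - ∑ i, c i • z i) = b := by
      rw [← LieHom.coe_toLinearMap, map_sub, map_sum]
      simp only [map_smul, LieHom.coe_toLinearMap]
      rw [hc, ← hab]
      abel
    rw [heq]
    exact hb
  have hP3 : ∀ (a u : nt), NT.ι u ∈ idealI g D f → NT.ι ⁅a, u⁆ ∈ idealI g D f := by
    intro a u hu
    rw [LieHom.map_lie]
    refine lie_mem_idealI D f ?_ hu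
    rw [← NT.range_eq]
    exact ⟨a, rfl⟩
  have hsum : ∀ (c : Fin N → ℂ) (u : nt) (w : V),
      ⁅(∑ i, c i • z i) + u, w⁆ = (∑ i, c i • ⁅z i, w⁆) + ⁅u, w⁆ := by
    intro c u w
    rw [add_lie]
    congr 1
    have hgen : ∀ s : Finset (Fin N), ⁅(∑ i ∈ s, c i • z i : nt), w⁆ = ∑ i ∈ s, c i • ⁅z i, w⁆ := by
      intro s
      induction s using Finset.induction with
      | empty => simp
      | insert _ _ h ih =>
        rw [Finset.sum_insert h, Finset.sum_insert h, add_lie, smul_lie, ih]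
    exact hgen _
  -- ordered monomials
  let applyL : List (Fin N) → V := fun l => l.foldr (fun i w => ⁅z i, w⁆) v
  let O : ℕ → Set V := fun k =>
    {w | ∃ l : List (Fin N), List.Chain' (fun a b => b ≤ a) l ∧ l.length ≤ k ∧ w = applyL l}
  let M : ℕ → Submodule ℂ V := fun k => Submodule.span ℂ (O k)
  have hOmono : ∀ k, O k ⊆ O (k + 1) := by
    rintro k w ⟨l, h1, h2, h3⟩
    exact ⟨l, h1, h2.trans (Nat.le_succ k), h3⟩
  have hMmono : Monotone M := monotone_nat_of_le_succ fun k => Submodule.span_mono (hOmono k)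
  have hvM : ∀ k, v ∈ M k := fun k =>
    Submodule.subset_span ⟨[], List.isChain_nil, Nat.zero_le _, rfl⟩
  have key : ∀ k : ℕ,
      (∀ u : nt, NT.ι u ∈ idealI g D f → ∀ w ∈ M k, ⁅u, w⁆ ∈ M k) ∧
      (∀ i : Fin N, ∀ w ∈ M k, ⁅z i, w⁆ ∈ M (k + 1)) := by
    intro k
    induction k with
    | zero =>
      have hgen0 : ∀ w ∈ O 0, w = v := by
        rintro w ⟨l, -, hl, rfl⟩
        have : l = [] := List.length_eq_zero_iff.mp (Nat.le_zero.mp hl)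
        rw [this]
        rfl
      constructor
      · intro u hu
        have hle : M 0 ≤ Submodule.comap (LieModule.toEnd ℂ nt V u) (M 0) := by
          refine Submodule.span_le.mpr ?_
          intro w hw
          rw [hgen0 w hw]
          simp only [SetLike.mem_coe, Submodule.mem_comap, LieModule.toEnd_apply_apply]
          rw [hann u hu]
          exact Submodule.zero_mem _
        intro w hw
        simpa [LieModule.toEnd_apply_apply] using hle hw
      · intro i
        have hle : M 0 ≤ Submodule.comap (LieModule.toEnd ℂ nt V (z i)) (M 1) := by
          refine Submodule.span_le.mpr ?_
          intro w hw
          rw [hgen0 w hw]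
          simp only [SetLike.mem_coe, Submodule.mem_comap, LieModule.toEnd_apply_apply]
          exact Submodule.subset_span ⟨[i], List.isChain_singleton i, by simp, rfl⟩
        intro w hw
        simpa [LieModule.toEnd_apply_apply] using hle hw
    | succ k ih =>
      obtain ⟨ihA, ihS⟩ := ih
      have hS : ∀ (d : ℕ) (i : Fin N), N ≤ i.val + d → ∀ w ∈ M (k + 1), ⁅z i, w⁆ ∈ M (k + 2) := by
        intro d
        induction d with
        | zero =>
          intro i hi
          exact absurd hi (by have := i.isLt; omega)
        | succ d ihd =>
          intro i hi
          suffices h : Submodule.span ℂ (O (k + 1)) ≤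
              Submodule.comap (LieModule.toEnd ℂ nt V (z i)) (M (k + 2)) by
            intro w hw
            simpa [LieModule.toEnd_apply_apply] using h hw
          refine Submodule.span_le.mpr ?_
          rintro w ⟨l, hchain, hlen, rfl⟩
          simp only [SetLike.mem_coe, Submodule.mem_comap, LieModule.toEnd_apply_apply]
          cases l with
          | nil =>
            exact Submodule.subset_span ⟨[i], List.isChain_singleton i, by simp, rfl⟩
          | cons j l' =>
            have hchain' : List.Chain' (fun a b => b ≤ a) l' := hchain.tail
            have hlen' : l'.length ≤ k := by simpa using hlen
            have hw' : applyL l' ∈ M k := Submodule.subset_span ⟨l', hchain', hlen', rfl⟩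
            by_cases hij : j ≤ i
            · refine Submodule.subset_span ⟨i :: j :: l', ?_, ?_, rfl⟩
              · exact List.isChain_cons_cons.mpr ⟨hij, hchain⟩
              · simp only [List.length_cons]
                omega
            · push_neg at hij
              have hlie : ⁅z i, applyL (j :: l')⁆ =
                  ⁅⁅z i, z j⁆, applyL l'⁆ + ⁅z j, ⁅z i, applyL l'⁆⁆ := by
                exact leibniz_lie _ _ _
              rw [show applyL (j :: l') = ⁅z j, applyL l'⁆ from rfl, leibniz_lie]
              apply Submodule.add_mem
              · obtain ⟨c, hc⟩ := hdecomp ⁅z i, z j⁆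
                have heq : (⁅z i, z j⁆ : nt) =
                    (∑ r, c r • z r) + (⁅z i, z j⁆ - ∑ r, c r • z r) := by abel
                rw [heq, hsum]
                apply Submodule.add_mem
                · refine Submodule.sum_mem _ fun r _ => Submodule.smul_mem _ _ ?_
                  exact hMmono (by omega : k + 1 ≤ k + 2) (ihS r _ hw')
                · exact hMmono (by omega : k ≤ k + 2) (ihA _ hc _ hw')
              · have h1 : ⁅z i, applyL l'⁆ ∈ M (k + 1) := ihS i _ hw'
                have hj : N ≤ j.val + d := by
                  have : i.val < j.val := hij
                  omega
                exact ihd j hj _ h1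
      have hSfin : ∀ i : Fin N, ∀ w ∈ M (k + 1), ⁅z i, w⁆ ∈ M (k + 2) :=
        fun i => hS N i (by omega)
      refine ⟨?_, hSfin⟩
      intro u hu
      suffices h : Submodule.span ℂ (O (k + 1)) ≤
          Submodule.comap (LieModule.toEnd ℂ nt V u) (M (k + 1)) by
        intro w hw
        simpa [LieModule.toEnd_apply_apply] using h hw
      refine Submodule.span_le.mpr ?_
      rintro w ⟨l, hchain, hlen, rfl⟩
      simp only [SetLike.mem_coe, Submodule.mem_comap, LieModule.toEnd_apply_apply]
      cases l with
      | nil =>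
        show ⁅u, v⁆ ∈ M (k + 1)
        rw [hann u hu]
        exact Submodule.zero_mem _
      | cons j l' =>
        have hchain' : List.Chain' (fun a b => b ≤ a) l' := hchain.tail
        have hlen' : l'.length ≤ k := by simpa using hlen
        have hw' : applyL l' ∈ M k := Submodule.subset_span ⟨l', hchain', hlen', rfl⟩
        rw [show applyL (j :: l') = ⁅z j, applyL l'⁆ from rfl, leibniz_lie]
        apply Submodule.add_mem
        · have hum : NT.ι ⁅u, z j⁆ ∈ idealI g D f := by
            rw [show (⁅u, z j⁆ : nt) = -⁅z j, u⁆ from (lie_skew _ _).symm,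
              ← LieHom.coe_toLinearMap, map_neg, LieHom.coe_toLinearMap]
            exact Submodule.neg_mem _ (hP3 (z j) u hu)
          exact hMmono (by omega : k ≤ k + 1) (ihA _ hum _ hw')
        · exact ihS j _ (ihA u hu _ hw')
  -- the union submodule is a Lie submodule
  let Minf : Submodule ℂ V := ⨆ k, M k
  have hMle : ∀ k, M k ≤ Minf := fun k => le_iSup M k
  have hmemMinf : ∀ w ∈ Minf, ∃ k, w ∈ M k := fun w hw =>
    (Submodule.mem_iSup_of_chain ⟨M, hMmono⟩ w).mp hw
  have hlieMM : ∀ (y : nt) (w : V), w ∈ Minf → ⁅y, w⁆ ∈ Minf := by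
    intro y w hw
    obtain ⟨k, hk⟩ := hmemMinf w hw
    obtain ⟨c, hc⟩ := hdecomp y
    have heq : y = (∑ i, c i • z i) + (y - ∑ i, c i • z i) := by abel
    rw [heq, hsum]
    apply Submodule.add_mem
    · exact Submodule.sum_mem _ fun r _ =>
        Submodule.smul_mem _ _ (hMle (k + 1) ((key k).2 r w hk))
    · exact hMle k ((key k).1 _ hc w hk)
  let MM : LieSubmodule ℂ nt V :=
    { Minf with
      lie_mem := fun {y} {w} hw => hlieMM y w hw }
  have hspanle : LieSubmodule.lieSpan ℂ nt {v} ≤ MM := by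
    rw [LieSubmodule.lieSpan_le]
    intro w hw
    rw [Set.mem_singleton_iff] at hw
    subst hw
    exact hMle 0 (hvM 0)
  -- invariant finite-dimensional chain
  let yfun : ℕ → nt := fun n => if h : n < N then z ⟨n, h⟩ else 0
  have hyfun : ∀ n, ActsLocallyFinitely nt V (yfun n) ∨ yfun n = 0 := by
    intro n
    by_cases h : n < N
    · left
      show ActsLocallyFinitely nt V (if h : n < N then z ⟨n, h⟩ else 0)
      rw [dif_pos h]
      exact hlf _ (hPwt ⟨n, h⟩)
    · right
      show (if h : n < N then z ⟨n, h⟩ else 0) = 0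
      rw [dif_neg h]
  obtain ⟨W, hW0, hWmono, hWfin, hWinv⟩ := exists_invariant_chain yfun v hyfun
  haveI : IsTrans (Fin N) (fun a b => b ≤ a) := ⟨fun a b c hab hbc => le_trans hbc hab⟩
  have happly : ∀ l : List (Fin N), List.Chain' (fun a b => b ≤ a) l →
      ∀ n : ℕ, (∀ i ∈ l, i.val < n) → applyL l ∈ W n := by
    intro l
    induction l with
    | nil =>
      intro _ n _
      exact hWmono (Nat.zero_le n) hW0
    | cons i l' ihl =>
      intro hchain n hn
      have hpair := List.isChain_iff_pairwise.mp hchain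
      have hall : ∀ j ∈ l', j ≤ i := (List.pairwise_cons.mp hpair).1
      have hl' : applyL l' ∈ W (i.val + 1) :=
        ihl hchain.tail (i.val + 1) (fun j hj => by have := hall j hj; omega)
      have hyz : yfun i.val = z i := by
        show (if h : i.val < N then z ⟨i.val, h⟩ else 0) = z i
        rw [dif_pos i.isLt]
      have hstep : ⁅z i, applyL l'⁆ ∈ W (i.val + 1) := by
        have h2 := hWinv i.val _ hl'
        rwa [hyz] at h2
      have hin : i.val + 1 ≤ n := hn i (List.mem_cons_self)
      exact hWmono hin hstep
  have hMW : ∀ k, M k ≤ W N := by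
    intro k
    refine Submodule.span_le.mpr ?_
    rintro w ⟨l, hchain, -, rfl⟩
    exact happly l hchain N (fun i _ => i.isLt)
  have hMinfW : Minf ≤ W N := iSup_le hMW
  haveI : FiniteDimensional ℂ ↥(W N) := hWfin N
  have hfinal : (LieSubmodule.lieSpan ℂ nt {v}).toSubmodule ≤ W N := by
    intro x hx
    exact hMinfW (hspanle hx)
  exact Submodule.finiteDimensional_of_le hfinal


end AffinePaper
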